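/- arXiv:2405.01049 — 3 statements merged into one kernel-verified Lean document; each statement's English description precedes it below -/
import Mathlib

section
/- The operators T_i of the polynomial representation of the finite Hecke algebra satisfy the braid relation: for 1 ≤ i ≤ n−2 and all f ∈ ℚ(t)[x_1,...,x_n], T_i(T_{i+1}(T_i(f))) = T_{i+1}(T_i(T_{i+1}(f))). -/
open MvPolynomial

set_option maxHeartbeats 4000000 in
/-- The Hecke operators `T_i` on `ℚ(t)[x_1,...,x_n]` satisfy the braid relation
`T_i T_{i+1} T_i = T_{i+1} T_i T_{i+1}`. Here `a,b,c` are the consecutive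
positions `i, i+1, i+2`, `Ti` acts on the pair `(a,b)` and `Ti1` on `(b,c)`. -/
theorem hecke_braid (n : ℕ) (a b c : Fin n)
    (hab : (b : ℕ) = (a : ℕ) + 1) (hbc : (c : ℕ) = (b : ℕ) + 1)
    (Ti Ti1 : MvPolynomial (Fin n) (RatFunc ℚ) → MvPolynomial (Fin n) (RatFunc ℚ))
    (hTi : ∀ f, (X a - X b) * (Ti f - rename (Equiv.swap a b) f)
      = (1 - C RatFunc.X) * X a * (f - rename (Equiv.swap a b) f))
    (hTi1 : ∀ f, (X b - X c) * (Ti1 f - rename (Equiv.swap b c) f)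
      = (1 - C RatFunc.X) * X b * (f - rename (Equiv.swap b c) f))
    (f : MvPolynomial (Fin n) (RatFunc ℚ)) :
    Ti (Ti1 (Ti f)) = Ti1 (Ti (Ti1 f)) := by
  have hab' : a ≠ b := by rintro rfl; omega
  have hbc' : b ≠ c := by rintro rfl; omega
  have hac' : a ≠ c := by rintro rfl; omega
  have hba' : b ≠ a := hab'.symm
  have hcb' : c ≠ b := hbc'.symm
  have hca' : c ≠ a := hac'.symm
  -- double-rename identities
  have hss : ∀ p : MvPolynomial (Fin n) (RatFunc ℚ),
      rename (Equiv.swap a b) (rename (Equiv.swap a b) p) = p := by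
    intro p
    rw [rename_rename]
    have h : (⇑(Equiv.swap a b) ∘ ⇑(Equiv.swap a b)) = id := by
      funext x; simp
    rw [h, rename_id, AlgHom.id_apply]
  have huu : ∀ p : MvPolynomial (Fin n) (RatFunc ℚ),
      rename (Equiv.swap b c) (rename (Equiv.swap b c) p) = p := by
    intro p
    rw [rename_rename]
    have h : (⇑(Equiv.swap b c) ∘ ⇑(Equiv.swap b c)) = id := by
      funext x; simp
    rw [h, rename_id, AlgHom.id_apply]
  have key5 : rename (Equiv.swap a b) (rename (Equiv.swap b c) (rename (Equiv.swap a b) f))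
      = rename (Equiv.swap b c) (rename (Equiv.swap a b) (rename (Equiv.swap b c) f)) := by
    rw [rename_rename, rename_rename, rename_rename, rename_rename]
    have hcomp : ((⇑(Equiv.swap a b) ∘ ⇑(Equiv.swap b c)) ∘ ⇑(Equiv.swap a b))
        = ((⇑(Equiv.swap b c) ∘ ⇑(Equiv.swap a b)) ∘ ⇑(Equiv.swap b c)) := by
      funext x
      by_cases hxa : x = a
      · subst hxa
        simp [Equiv.swap_apply_of_ne_of_ne, hab', hac', hbc', hba', hcb', hca',
          Equiv.swap_apply_left, Equiv.swap_apply_right, Function.comp]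
      · by_cases hxb : x = b
        · subst hxb
          simp [Equiv.swap_apply_of_ne_of_ne, hab', hac', hbc', hba', hcb', hca',
            Equiv.swap_apply_left, Equiv.swap_apply_right, Function.comp]
        · by_cases hxc : x = c
          · subst hxc
            simp [Equiv.swap_apply_of_ne_of_ne, hab', hac', hbc', hba', hcb', hca',
              Equiv.swap_apply_left, Equiv.swap_apply_right, Function.comp]
          · simp [Function.comp, Equiv.swap_apply_of_ne_of_ne, hxa, hxb, hxc]
    rw [hcomp]
  -- renamed versions of the defining relations
  have E2 := congrArg (rename (Equiv.swap b c)) (hTi f)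
  simp only [map_mul, map_sub, map_one, rename_X, rename_C,
    Equiv.swap_apply_left, Equiv.swap_apply_right,
    Equiv.swap_apply_of_ne_of_ne hab' hac'] at E2
  have E3 := congrArg (rename (Equiv.swap a b)) (hTi f)
  simp only [map_mul, map_sub, map_one, rename_X, rename_C,
    Equiv.swap_apply_left, Equiv.swap_apply_right] at E3
  rw [hss f] at E3
  have E4 := congrArg (rename (Equiv.swap a b)) E2
  simp only [map_mul, map_sub, map_one, rename_X, rename_C,
    Equiv.swap_apply_left, Equiv.swap_apply_right,
    Equiv.swap_apply_of_ne_of_ne hca' hcb'] at E4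
  have E5 := hTi1 (Ti f)
  have E6 := congrArg (rename (Equiv.swap a b)) E5
  simp only [map_mul, map_sub, map_one, rename_X, rename_C,
    Equiv.swap_apply_left, Equiv.swap_apply_right,
    Equiv.swap_apply_of_ne_of_ne hca' hcb'] at E6
  have E7 := hTi (Ti1 (Ti f))
  have F1 := hTi1 f
  have F2 := congrArg (rename (Equiv.swap a b)) F1
  simp only [map_mul, map_sub, map_one, rename_X, rename_C,
    Equiv.swap_apply_left, Equiv.swap_apply_right,
    Equiv.swap_apply_of_ne_of_ne hca' hcb'] at F2
  have F3 := congrArg (rename (Equiv.swap b c)) F1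
  simp only [map_mul, map_sub, map_one, rename_X, rename_C,
    Equiv.swap_apply_left, Equiv.swap_apply_right] at F3
  rw [huu f] at F3
  have F4 := congrArg (rename (Equiv.swap b c)) F2
  simp only [map_mul, map_sub, map_one, rename_X, rename_C,
    Equiv.swap_apply_left, Equiv.swap_apply_right,
    Equiv.swap_apply_of_ne_of_ne hab' hac'] at F4
  have F5 := hTi (Ti1 f)
  have F6 := congrArg (rename (Equiv.swap b c)) F5
  simp only [map_mul, map_sub, map_one, rename_X, rename_C,
    Equiv.swap_apply_left, Equiv.swap_apply_right,
    Equiv.swap_apply_of_ne_of_ne hab' hac'] at F6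
  have F7 := hTi1 (Ti (Ti1 f))
  -- nonvanishing of the multiplier
  have hX : ∀ i j : Fin n, i ≠ j →
      (X i - X j : MvPolynomial (Fin n) (RatFunc ℚ)) ≠ 0 := by
    intro i j hij h
    have := sub_eq_zero.mp h
    exact hij (MvPolynomial.X_injective this)
  have hN : (((X a - X b) * (X b - X c) * (X a - X c))^2 :
      MvPolynomial (Fin n) (RatFunc ℚ)) ≠ 0 := by
    apply pow_ne_zero
    exact mul_ne_zero (mul_ne_zero (hX a b hab') (hX b c hbc')) (hX a c hac')
  apply mul_left_cancel₀ hN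
  linear_combination
    ((-1)*(X a)*(X b)*(X c)^3*((1 - C RatFunc.X))^2 + (X a)*(X b)^2*(X c)^2*((1 - C RatFunc.X))^2 + (2)*(X a)^2*(X b)*(X c)^2*((1 - C RatFunc.X))^2 + (-2)*(X a)^2*(X b)^2*(X c)*((1 - C RatFunc.X))^2 + (-1)*(X a)^3*(X b)*(X c)*((1 - C RatFunc.X))^2 + (X a)^3*(X b)^2*((1 - C RatFunc.X))^2) * (hTi f) +
    ((X a)*(X b)*(X c)^3*((1 - C RatFunc.X)) + (-2)*(X a)*(X b)^2*(X c)^2*((1 - C RatFunc.X)) + (X a)*(X b)^2*(X c)^2*((1 - C RatFunc.X))^2 + (X a)*(X b)^3*(X c)*((1 - C RatFunc.X)) + (-1)*(X a)*(X b)^3*(X c)*((1 - C RatFunc.X))^2 + (-1)*(X a)^2*(X c)^3*((1 - C RatFunc.X)) + (X a)^2*(X b)*(X c)^2*((1 - C RatFunc.X)) + (-1)*(X a)^2*(X b)*(X c)^2*((1 - C RatFunc.X))^2 + (X a)^2*(X b)^2*(X c)*((1 - C RatFunc.X)) + (-1)*(X a)^2*(X b)^3*((1 - C RatFunc.X)) +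 (X a)^2*(X b)^3*((1 - C RatFunc.X))^2 + (X a)^3*(X c)^2*((1 - C RatFunc.X)) + (-2)*(X a)^3*(X b)*(X c)*((1 - C RatFunc.X)) + (X a)^3*(X b)*(X c)*((1 - C RatFunc.X))^2 + (X a)^3*(X b)^2*((1 - C RatFunc.X)) + (-1)*(X a)^3*(X b)^2*((1 - C RatFunc.X))^2) * E2 +
    ((-1)*(X a)*(X b)*(X c)^3*((1 - C RatFunc.X)) + (2)*(X a)*(X b)^2*(X c)^2*((1 - C RatFunc.X)) + (-1)*(X a)*(X b)^3*(X c)*((1 - C RatFunc.X)) + (X a)^2*(X c)^3*((1 - C RatFunc.X)) + (-1)*(X a)^2*(X c)^3*((1 - C RatFunc.X))^2 + (-1)*(X a)^2*(X b)*(X c)^2*((1 - C RatFunc.X)) + (2)*(X a)^2*(X b)*(X c)^2*((1 - C RatFunc.X))^2 + (-1)*(X a)^2*(X b)^2*(X c)*((1 - C RatFunc.X)) + (-1)*(X a)^2*(X b)^2*(X c)*((1 - C RatFunc.X))^2 + (X a)^2*(X b)^3*((1 - C RatFunc.X)) + (-1)*(X a)^3*(X c)^2*((1 - C RatFunc.X))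 + (X a)^3*(X c)^2*((1 - C RatFunc.X))^2 + (2)*(X a)^3*(X b)*(X c)*((1 - C RatFunc.X)) + (-2)*(X a)^3*(X b)*(X c)*((1 - C RatFunc.X))^2 + (-1)*(X a)^3*(X b)^2*((1 - C RatFunc.X)) + (X a)^3*(X b)^2*((1 - C RatFunc.X))^2) * E3 +
    ((-1)*(X b)^2*(X c)^3 + (X b)^3*(X c)^2 + (2)*(X a)*(X b)*(X c)^3 + (-1)*(X a)*(X b)*(X c)^3*((1 - C RatFunc.X)) + (-2)*(X a)*(X b)^3*(X c) + (X a)*(X b)^3*(X c)*((1 - C RatFunc.X)) + (-1)*(X a)^2*(X c)^3 + (X a)^2*(X c)^3*((1 - C RatFunc.X)) + (-3)*(X a)^2*(X b)*(X c)^2 + (3)*(X a)^2*(X b)*(X c)^2*((1 - C RatFunc.X)) + (-1)*(X a)^2*(X b)*(X c)^2*((1 - C RatFunc.X))^2 + (3)*(X a)^2*(X b)^2*(X c) + (-3)*(X a)^2*(X b)^2*(X c)*((1 - C RatFunc.X)) + (X a)^2*(X b)^2*(X c)*((1 - C RatFunc.X))^2 + (X a)^2*(X b)^3 + (-1)*(X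 a)^2*(X b)^3*((1 - C RatFunc.X)) + (2)*(X a)^3*(X c)^2 + (-3)*(X a)^3*(X c)^2*((1 - C RatFunc.X)) + (X a)^3*(X c)^2*((1 - C RatFunc.X))^2 + (-2)*(X a)^3*(X b)^2 + (3)*(X a)^3*(X b)^2*((1 - C RatFunc.X)) + (-1)*(X a)^3*(X b)^2*((1 - C RatFunc.X))^2 + (-1)*(X a)^4*(X c) + (2)*(X a)^4*(X c)*((1 - C RatFunc.X)) + (-1)*(X a)^4*(X c)*((1 - C RatFunc.X))^2 + (X a)^4*(X b) + (-2)*(X a)^4*(X b)*((1 - C RatFunc.X)) + (X a)^4*(X b)*((1 - C RatFunc.X))^2) * E4 +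
    ((X a)*(X b)*(X c)^3*((1 - C RatFunc.X)) + (-1)*(X a)*(X b)^2*(X c)^2*((1 - C RatFunc.X)) + (-1)*(X a)^2*(X c)^3*((1 - C RatFunc.X)) + (-1)*(X a)^2*(X b)*(X c)^2*((1 - C RatFunc.X)) + (2)*(X a)^2*(X b)^2*(X c)*((1 - C RatFunc.X)) + (2)*(X a)^3*(X c)^2*((1 - C RatFunc.X)) + (-1)*(X a)^3*(X b)*(X c)*((1 - C RatFunc.X)) + (-1)*(X a)^3*(X b)^2*((1 - C RatFunc.X)) + (-1)*(X a)^4*(X c)*((1 - C RatFunc.X)) + (X a)^4*(X b)*((1 - C RatFunc.X))) * E5 +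
    ((-1)*(X b)^2*(X c)^3 + (2)*(X b)^3*(X c)^2 + (-1)*(X b)^4*(X c) + (2)*(X a)*(X b)*(X c)^3 + (-1)*(X a)*(X b)*(X c)^3*((1 - C RatFunc.X)) + (-3)*(X a)*(X b)^2*(X c)^2 + (2)*(X a)*(X b)^2*(X c)^2*((1 - C RatFunc.X)) + (-1)*(X a)*(X b)^3*(X c)*((1 - C RatFunc.X)) + (X a)*(X b)^4 + (-1)*(X a)^2*(X c)^3 + (X a)^2*(X c)^3*((1 - C RatFunc.X)) + (-1)*(X a)^2*(X b)*(X c)^2*((1 - C RatFunc.X)) + (3)*(X a)^2*(X b)^2*(X c) + (-1)*(X a)^2*(X b)^2*(X c)*((1 - C RatFunc.X)) + (-2)*(X a)^2*(X b)^3 + (X a)^2*(X b)^3*((1 - C RatFunc.X)) + (X a)^3*(X c)^2 + (-1)*(X a)^3*(X c)^2*((1 - C RatFunc.X)) + (-2)*(X a)^3*(X b)*(X c) + (2)*(X a)^3*(X b)*(X c)*((1 - C RatFunc.X)) + (X a)^3*(X b)^2 + (-1)*(X a)^3*(X b)^2*((1 - C RatFunc.X))) * E6 +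
    ((-1)*(X b)*(X c)^4 + (2)*(X b)^2*(X c)^3 + (-1)*(X b)^3*(X c)^2 + (X a)*(X c)^4 + (-3)*(X a)*(X b)^2*(X c)^2 + (2)*(X a)*(X b)^3*(X c) + (-2)*(X a)^2*(X c)^3 + (3)*(X a)^2*(X b)*(X c)^2 + (-1)*(X a)^2*(X b)^3 + (X a)^3*(X c)^2 + (-2)*(X a)^3*(X b)*(X c) + (X a)^3*(X b)^2) * E7 +
    ((X a)*(X b)^2*(X c)^2*((1 - C RatFunc.X))^2 + (-1)*(X a)^2*(X b)*(X c)^2*((1 - C RatFunc.X))^2 + (-2)*(X a)^2*(X b)^2*(X c)*((1 - C RatFunc.X))^2 + (2)*(X a)^3*(X b)*(X c)*((1 - C RatFunc.X))^2 + (X a)^3*(X b)^2*((1 - C RatFunc.X))^2 + (-1)*(X a)^4*(X b)*((1 - C RatFunc.X))^2) * F1 +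
    ((-1)*(X b)^3*(X c)^2*((1 - C RatFunc.X)) + (X b)^4*(X c)*((1 - C RatFunc.X)) + (2)*(X a)*(X b)^2*(X c)^2*((1 - C RatFunc.X)) + (-1)*(X a)*(X b)^2*(X c)^2*((1 - C RatFunc.X))^2 + (-1)*(X a)*(X b)^3*(X c)*((1 - C RatFunc.X)) + (X a)*(X b)^3*(X c)*((1 - C RatFunc.X))^2 + (-1)*(X a)*(X b)^4*((1 - C RatFunc.X)) + (-1)*(X a)^2*(X b)*(X c)^2*((1 - C RatFunc.X)) + (X a)^2*(X b)*(X c)^2*((1 - C RatFunc.X))^2 + (-1)*(X a)^2*(X b)^2*(X c)*((1 - C RatFunc.X)) + (2)*(X a)^2*(X b)^3*((1 - C RatFunc.X)) + (-1)*(X a)^2*(X b)^3*((1 - C RatFunc.X))^2 + (X a)^3*(X b)*(X c)*((1 - C RatFunc.X)) + (-1)*(X a)^3*(X b)*(X c)*((1 - C RatFunc.X))^2 + (-1)*(X a)^3*(X b)^2*((1 - C RatFunc.X)) + (X a)^3*(X b)^2*((1 - C RatFunc.X))^2) * F2 +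
    ((X a)*(X b)^2*(X c)^2*((1 - C RatFunc.X)) + (-1)*(X a)*(X b)^3*(X c)*((1 - C RatFunc.X)) + (X a)*(X b)^3*(X c)*((1 - C RatFunc.X))^2 + (-2)*(X a)^2*(X b)*(X c)^2*((1 - C RatFunc.X)) + (X a)^2*(X b)^2*(X c)*((1 - C RatFunc.X)) + (-2)*(X a)^2*(X b)^2*(X c)*((1 - C RatFunc.X))^2 + (X a)^2*(X b)^3*((1 - C RatFunc.X)) + (-1)*(X a)^2*(X b)^3*((1 - C RatFunc.X))^2 + (X a)^3*(X c)^2*((1 - C RatFunc.X)) + (X a)^3*(X b)*(X c)*((1 - C RatFunc.X)) + (X a)^3*(X b)*(X c)*((1 - C RatFunc.X))^2 + (-2)*(X a)^3*(X b)^2*((1 - C RatFunc.X)) + (2)*(X a)^3*(X b)^2*((1 - C RatFunc.X))^2 + (-1)*(X a)^4*(X c)*((1 - C RatFunc.X)) + (X a)^4*(X b)*((1 - C RatFunc.X)) + (-1)*(X a)^4*(X b)*((1 - C RatFunc.X))^2) * F3 +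
    ((X b)*(X c)^4 + (-2)*(X b)^2*(X c)^3 + (X b)^2*(X c)^3*((1 - C RatFunc.X)) + (X b)^3*(X c)^2 + (-1)*(X b)^3*(X c)^2*((1 - C RatFunc.X)) + (-1)*(X a)*(X c)^4 + (3)*(X a)*(X b)^2*(X c)^2 + (-3)*(X a)*(X b)^2*(X c)^2*((1 - C RatFunc.X)) + (X a)*(X b)^2*(X c)^2*((1 - C RatFunc.X))^2 + (-2)*(X a)*(X b)^3*(X c) + (3)*(X a)*(X b)^3*(X c)*((1 - C RatFunc.X)) + (-1)*(X a)*(X b)^3*(X c)*((1 - C RatFunc.X))^2 + (2)*(X a)^2*(X c)^3 + (-1)*(X a)^2*(X c)^3*((1 - C RatFunc.X)) + (-3)*(X a)^2*(X b)*(X c)^2 + (3)*(X a)^2*(X b)*(X c)^2*((1 - C RatFunc.X)) + (-1)*(X a)^2*(X b)*(X c)^2*((1 - C RatFunc.X))^2 + (X a)^2*(X b)^3 + (-2)*(X a)^2*(X b)^3*((1 - C RatFunc.X)) + (X a)^2*(X b)^3*((1 - C RatFunc.X))^2 + (-1)*(X a)^3*(X c)^2 + (X a)^3*(X c)^2*((1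 - C RatFunc.X)) + (2)*(X a)^3*(X b)*(X c) + (-3)*(X a)^3*(X b)*(X c)*((1 - C RatFunc.X)) + (X a)^3*(X b)*(X c)*((1 - C RatFunc.X))^2 + (-1)*(X a)^3*(X b)^2 + (2)*(X a)^3*(X b)^2*((1 - C RatFunc.X)) + (-1)*(X a)^3*(X b)^2*((1 - C RatFunc.X))^2) * F4 +
    ((-1)*(X b)^2*(X c)^3*((1 - C RatFunc.X)) + (X b)^3*(X c)^2*((1 - C RatFunc.X)) + (X a)*(X b)*(X c)^3*((1 - C RatFunc.X)) + (X a)*(X b)^2*(X c)^2*((1 - C RatFunc.X)) + (-2)*(X a)*(X b)^3*(X c)*((1 - C RatFunc.X)) + (-2)*(X a)^2*(X b)*(X c)^2*((1 - C RatFunc.X)) + (X a)^2*(X b)^2*(X c)*((1 - C RatFunc.X)) + (X a)^2*(X b)^3*((1 - C RatFunc.X)) + (X a)^3*(X b)*(X c)*((1 - C RatFunc.X)) + (-1)*(X a)^3*(X b)^2*((1 - C RatFunc.X))) * F5 +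
    ((X b)^2*(X c)^3 + (-2)*(X b)^3*(X c)^2 + (X b)^3*(X c)^2*((1 - C RatFunc.X)) + (X b)^4*(X c) + (-1)*(X b)^4*(X c)*((1 - C RatFunc.X)) + (-2)*(X a)*(X b)*(X c)^3 + (3)*(X a)*(X b)^2*(X c)^2 + (-2)*(X a)*(X b)^2*(X c)^2*((1 - C RatFunc.X)) + (X a)*(X b)^3*(X c)*((1 - C RatFunc.X)) + (-1)*(X a)*(X b)^4 + (X a)*(X b)^4*((1 - C RatFunc.X)) + (X a)^2*(X c)^3 + (X a)^2*(X b)*(X c)^2*((1 - C RatFunc.X)) + (-3)*(X a)^2*(X b)^2*(X c) + (X a)^2*(X b)^2*(X c)*((1 - C RatFunc.X)) + (2)*(X a)^2*(X b)^3 + (-2)*(X a)^2*(X b)^3*((1 - C RatFunc.X)) + (-1)*(X a)^3*(X c)^2 + (2)*(X a)^3*(X b)*(X c) + (-1)*(X a)^3*(X b)*(X c)*((1 - C RatFunc.X)) + (-1)*(X a)^3*(X b)^2 + (X a)^3*(X b)^2*((1 - C RatFunc.X))) * F6 +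
    ((X b)^2*(X c)^3 + (-1)*(X b)^3*(X c)^2 + (-2)*(X a)*(X b)*(X c)^3 + (2)*(X a)*(X b)^3*(X c) + (X a)^2*(X c)^3 + (3)*(X a)^2*(X b)*(X c)^2 + (-3)*(X a)^2*(X b)^2*(X c) + (-1)*(X a)^2*(X b)^3 + (-2)*(X a)^3*(X c)^2 + (2)*(X a)^3*(X b)^2 + (X a)^4*(X c) + (-1)*(X a)^4*(X b)) * F7 +
    ((X b)^2*(X c)^4 + (-2)*(X b)^3*(X c)^3 + (X b)^3*(X c)^3*((1 - C RatFunc.X)) + (X b)^4*(X c)^2 + (-1)*(X b)^4*(X c)^2*((1 - C RatFunc.X)) + (-2)*(X a)*(X b)*(X c)^4 + (X a)*(X b)*(X c)^4*((1 - C RatFunc.X)) + (2)*(X a)*(X b)^2*(X c)^3 + (-3)*(X a)*(X b)^2*(X c)^3*((1 - C RatFunc.X)) + (X a)*(X b)^2*(X c)^3*((1 - C RatFunc.X))^2 + (2)*(X a)*(X b)^3*(X c)^2 + (-1)*(X a)*(X b)^3*(X c)^2*((1 - C RatFunc.X)) + (-2)*(X a)*(X b)^4*(X c) + (3)*(X a)*(X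 b)^4*(X c)*((1 - C RatFunc.X)) + (-1)*(X a)*(X b)^4*(X c)*((1 - C RatFunc.X))^2 + (X a)^2*(X c)^4 + (-1)*(X a)^2*(X c)^4*((1 - C RatFunc.X)) + (2)*(X a)^2*(X b)*(X c)^3 + (-1)*(X a)^2*(X b)*(X c)^3*((1 - C RatFunc.X)) + (-6)*(X a)^2*(X b)^2*(X c)^2 + (9)*(X a)^2*(X b)^2*(X c)^2*((1 - C RatFunc.X)) + (-5)*(X a)^2*(X b)^2*(X c)^2*((1 - C RatFunc.X))^2 + (X a)^2*(X b)^2*(X c)^2*((1 - C RatFunc.X))^3 + (2)*(X a)^2*(X b)^3*(X c) + (-5)*(X a)^2*(X b)^3*(X c)*((1 - C RatFunc.X)) + (4)*(X a)^2*(X b)^3*(X c)*((1 - C RatFunc.X))^2 + (-1)*(X a)^2*(X b)^3*(X c)*((1 - C RatFunc.X))^3 + (X a)^2*(X b)^4 + (-2)*(X a)^2*(X b)^4*((1 - C RatFunc.X)) + (X a)^2*(X b)^4*((1 - C RatFunc.X))^2 + (-2)*(X a)^3*(X c)^3 + (3)*(X a)^3*(X c)^3*((1 - C RatFunc.X)) +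 (-1)*(X a)^3*(X c)^3*((1 - C RatFunc.X))^2 + (2)*(X a)^3*(X b)*(X c)^2 + (-5)*(X a)^3*(X b)*(X c)^2*((1 - C RatFunc.X)) + (4)*(X a)^3*(X b)*(X c)^2*((1 - C RatFunc.X))^2 + (-1)*(X a)^3*(X b)*(X c)^2*((1 - C RatFunc.X))^3 + (2)*(X a)^3*(X b)^2*(X c) + (-3)*(X a)^3*(X b)^2*(X c)*((1 - C RatFunc.X)) + (X a)^3*(X b)^2*(X c)*((1 - C RatFunc.X))^2 + (-2)*(X a)^3*(X b)^3 + (5)*(X a)^3*(X b)^3*((1 - C RatFunc.X)) + (-4)*(X a)^3*(X b)^3*((1 - C RatFunc.X))^2 + (X a)^3*(X b)^3*((1 - C RatFunc.X))^3 + (X a)^4*(X c)^2 + (-2)*(X a)^4*(X c)^2*((1 - C RatFunc.X)) + (X a)^4*(X c)^2*((1 - C RatFunc.X))^2 + (-2)*(X a)^4*(X b)*(X c) + (5)*(X a)^4*(X b)*(X c)*((1 - C RatFunc.X)) + (-4)*(X a)^4*(X b)*(X c)*((1 - C RatFunc.X))^2 + (X a)^4*(X b)*(X c)*((1 - C RatFunc.X))^3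 + (X a)^4*(X b)^2 + (-3)*(X a)^4*(X b)^2*((1 - C RatFunc.X)) + (3)*(X a)^4*(X b)^2*((1 - C RatFunc.X))^2 + (-1)*(X a)^4*(X b)^2*((1 - C RatFunc.X))^3) * key5
end

section
/- If α ∈ ℤ_{≥0}^n has strictly increasing entries α_i < α_{i+1} < ... < α_j on an interval 1 ≤ i < j ≤ n, then the key polynomial K_α(x_1,...,x_n) is symmetric in the variables x_i, x_{i+1}, ..., x_j; in particular ξ_k(K_α) = K_α for all i ≤ k ≤ j−1. -/
open MvPolynomial in
/-- A family of key polynomials for `n` variables: `K α = x^α` when `α` is weakly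
decreasing, and `K (s_i α) = ξ_i (K α)` when `α_i > α_{i+1}`, where `ξ_i` is the
isobaric divided difference operator (characterized by multiplication by
`x_i - x_{i+1}`). These properties determine `K` uniquely. -/
def IsKeyFamily (n : ℕ) (K : (Fin n → ℕ) → MvPolynomial (Fin n) ℚ) : Prop :=
  (∀ α : Fin n → ℕ, Antitone α → K α = ∏ i, X i ^ α i) ∧
  (∀ (α : Fin n → ℕ) (a b : Fin n), (b : ℕ) = (a : ℕ) + 1 → α b < α a →
    (X a - X b) * K (α ∘ Equiv.swap a b)
      = X a * K α - X b * rename (Equiv.swap a b) (K α))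

open MvPolynomial

/-- If `α` is strictly increasing on the interval `[i, j]`, then `K_α` is symmetric
in the variables `x_i, ..., x_j`; in particular `ξ_p (K_α) = K_α` for every adjacent
pair `p, p+1` in the interval. -/
theorem key_symmetric_on_increasing_interval (n : ℕ)
    (K : (Fin n → ℕ) → MvPolynomial (Fin n) ℚ) (hK : IsKeyFamily n K)
    (α : Fin n → ℕ) (i j : Fin n) (hij : i < j)
    (hinc : ∀ p q : Fin n, i ≤ p → p < q → q ≤ j → α p < α q) :
    ∀ p q : Fin n, i ≤ p → (q : ℕ) = (p : ℕ) + 1 → q ≤ j →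
      rename (Equiv.swap p q) (K α) = K α ∧
      ∀ g : MvPolynomial (Fin n) ℚ,
        (X p - X q) * g = X p * K α - X q * rename (Equiv.swap p q) (K α) →
        g = K α := by
  intro p q hi hpq hq
  have hlt : p < q := by rw [Fin.lt_def]; omega
  have hαpq : α p < α q := hinc p q hi hlt hq
  set e := Equiv.swap p q with he
  set β := α ∘ e with hβ
  have hβswap : β ∘ e = α := by
    funext x
    simp [hβ, Function.comp, he, Equiv.swap_apply_self]
  have hβlt : β q < β p := by
    simp [hβ, Function.comp, he, Equiv.swap_apply_left, Equiv.swap_apply_right, hαpq]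
  have E := hK.2 β p q hpq hβlt
  rw [hβswap] at E
  have hne : (X p - X q : MvPolynomial (Fin n) ℚ) ≠ 0 := by
    apply sub_ne_zero_of_ne
    exact fun h => (Fin.lt_iff_val_lt_val.mp hlt).ne (congrArg Fin.val (X_injective h))
  have E2 := congrArg (rename e) E
  simp only [map_mul, map_sub, rename_X] at E2
  rw [rename_rename] at E2
  have hee : (⇑e ∘ ⇑e) = id := by
    funext x; simp [he, Equiv.swap_apply_self]
  rw [hee, rename_id, AlgHom.id_apply] at E2
  rw [Equiv.swap_apply_left, Equiv.swap_apply_right] at E2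
  have key : (X p - X q) * rename e (K α) = (X p - X q) * K α := by
    have : (X p - X q) * rename e (K α) = -((X q - X p) * rename e (K α)) := by ring
    rw [this, E2, E]; ring
  have hsym : rename e (K α) = K α := mul_left_cancel₀ hne key
  refine ⟨hsym, fun g hg => ?_⟩
  rw [hsym] at hg
  have : (X p - X q) * g = (X p - X q) * K α := by rw [hg]; ring
  exact mul_left_cancel₀ hne this
end

section
/- The partial Weyl symmetrizer satisfies the recursion W_k^{(n)} = ξ_{n−1}···ξ_{k+1} ∘ W_{k+1}^{(n)}: for any polynomial f ∈ ℚ[x_1,...,x_n] and 0 ≤ k ≤ n−1, W_k^{(n)}(f) = ξ_{n−1}(ξ_{n−2}(···ξ_{k+1}(W_{k+1}^{(n)}(f))···)). -/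
open MvPolynomial in
/-- The partial Weyl symmetrizer `W_k^{(n)}` on `ℚ[x_1,...,x_n]` (0-indexed
variables), characterized by
`(∏_{k ≤ i < j} (x_i - x_j)) · W f = Σ_σ (-1)^{ℓ(σ)} σ(x^{δ_k} f)`,
where `σ` ranges over the permutations of `{0,...,n-1}` fixing `0,...,k-1`
pointwise and `δ_k = (0^k, n-k-1, ..., 1, 0)`. -/
def IsWeylSym (n k : ℕ)
    (W : MvPolynomial (Fin n) ℚ → MvPolynomial (Fin n) ℚ) : Prop :=
  ∀ f, (∏ p ∈ Finset.univ.filter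
        (fun p : Fin n × Fin n => k ≤ (p.1 : ℕ) ∧ p.1 < p.2), (X p.1 - X p.2)) * W f
    = ∑ σ ∈ Finset.univ.filter
        (fun σ : Equiv.Perm (Fin n) => ∀ i : Fin n, (i : ℕ) < k → σ i = i),
        (Equiv.Perm.sign σ : ℤ) •
          rename σ ((∏ j : Fin n,
            X j ^ (if (j : ℕ) < k then 0 else n - 1 - (j : ℕ))) * f)

open MvPolynomial

open Finset in
section
open Finset

namespace WSR

noncomputable def v (n : ℕ) (i : ℕ) : MvPolynomial (Fin n) ℚ :=
  if h : i < n then X ⟨i, h⟩ else 0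

def sw (n : ℕ) (a b : ℕ) : Equiv.Perm (Fin n) :=
  if h : a < n ∧ b < n then Equiv.swap ⟨a, h.1⟩ ⟨b, h.2⟩ else 1

lemma sw_apply (n a b i : ℕ) (ha : a < n) (hb : b < n) (hi : i < n) :
    (sw n a b) ⟨i, hi⟩ = ⟨if i = a then b else if i = b then a else i,
      by split_ifs <;> assumption⟩ := by
  rw [sw, dif_pos ⟨ha, hb⟩, Equiv.swap_apply_def]
  split_ifs with h1 h2 h3 h4 h5 <;> simp_all [Fin.ext_iff]

lemma rename_sw_v (n a b i : ℕ) (ha : a < n) (hb : b < n) :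
    rename (sw n a b) (v n i) = v n (if i = a then b else if i = b then a else i) := by
  by_cases hi : i < n
  · have hlt : (if i = a then b else if i = b then a else i) < n := by split_ifs <;> assumption
    rw [v, dif_pos hi, rename_X, sw_apply n a b i ha hb hi]
    conv_rhs => rw [v, dif_pos hlt]
  · have h1 : i ≠ a := by omega
    have h2 : i ≠ b := by omega
    rw [if_neg h1, if_neg h2, v, dif_neg hi, map_zero]

lemma v_sub_ne (n i j : ℕ) (hi : i < n) (hj : j < n) (hij : i ≠ j) :
    v n i - v n j ≠ 0 := by
  rw [v, v, dif_pos hi, dif_pos hj, sub_ne_zero]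
  intro hh
  exact hij (by simpa [Fin.ext_iff] using MvPolynomial.X_injective (R := ℚ) hh)

noncomputable def dd (n k t : ℕ) : MvPolynomial (Fin n) ℚ :=
  ∏ j ∈ Icc (k+1) t, ∏ i ∈ Ico k j, (v n i - v n j)

noncomputable def dh (n k r t : ℕ) : MvPolynomial (Fin n) ℚ :=
  ∏ j ∈ Icc (k+1) t, ∏ i ∈ Ico k j, (if i = r ∨ j = r then 1 else v n i - v n j)

lemma dd_succ (n k t : ℕ) (h : k ≤ t) :
    dd n k (t+1) = dd n k t * ∏ i ∈ Ico k (t+1), (v n i - v n (t+1)) := by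
  rw [dd, dd, Finset.prod_Icc_succ_top (by omega : k+1 ≤ t+1)]

lemma dh_succ (n k r t : ℕ) (h : k ≤ t) :
    dh n k r (t+1) = dh n k r t *
      ∏ i ∈ Ico k (t+1), (if i = r ∨ t+1 = r then 1 else v n i - v n (t+1)) := by
  rw [dh, dh, Finset.prod_Icc_succ_top (by omega : k+1 ≤ t+1)]

lemma dh_of_gt (n k r t : ℕ) (h : t < r) : dh n k r t = dd n k t := by
  rw [dh, dd]
  refine Finset.prod_congr rfl fun j hj => Finset.prod_congr rfl fun i hi => ?_
  simp only [mem_Icc] at hj; simp only [mem_Ico] at hi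
  rw [if_neg (by omega)]

lemma dh_diag_succ (n k t : ℕ) (h : k ≤ t) : dh n k (t+1) (t+1) = dd n k t := by
  rw [dh_succ n k (t+1) t h, dh_of_gt n k (t+1) t (by omega)]
  have : ∀ i ∈ Ico k (t+1),
      (if i = t+1 ∨ t+1 = t+1 then 1 else v n i - v n (t+1)) = (1 : MvPolynomial (Fin n) ℚ) := by
    intro i hi; rw [if_pos (Or.inr rfl)]
  rw [Finset.prod_congr rfl this, Finset.prod_const_one, mul_one]

lemma dd_eq_dh_diag (n k t : ℕ) (h : k ≤ t) :
    dd n k t = dh n k t t * ∏ i ∈ Ico k t, (v n i - v n t) := by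
  rcases eq_or_lt_of_le h with rfl | hlt
  · simp [dd, dh, Finset.Icc_eq_empty (by omega : ¬ k+1 ≤ k)]
  · obtain ⟨u, rfl⟩ : ∃ u, t = u + 1 := ⟨t - 1, by omega⟩
    rw [dd_succ n k u (by omega), dh_diag_succ n k u (by omega)]

lemma rho_dd (n k t : ℕ) (h : k ≤ t) (ht : t + 1 < n) :
    rename (sw n t (t+1)) (dd n k t)
      = dh n k t t * ∏ i ∈ Ico k t, (v n i - v n (t+1)) := by
  have key : ∀ j ∈ Icc (k+1) t,
      rename (sw n t (t+1)) (∏ i ∈ Ico k j, (v n i - v n j))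
        = ∏ i ∈ Ico k j, (v n i - v n (if j = t then t+1 else j)) := by
    intro j hj
    rw [map_prod]
    refine Finset.prod_congr rfl fun i hi => ?_
    simp only [mem_Icc] at hj; simp only [mem_Ico] at hi
    rw [map_sub, rename_sw_v n t (t+1) i (by omega) ht, rename_sw_v n t (t+1) j (by omega) ht]
    split_ifs <;> first | rfl | (exfalso; omega)
  rw [dd, map_prod, Finset.prod_congr rfl key]
  rcases eq_or_lt_of_le h with rfl | hlt
  · simp [dh, Finset.Icc_eq_empty (by omega : ¬ k+1 ≤ k)]
  · obtain ⟨u, rfl⟩ : ∃ u, t = u + 1 := ⟨t - 1, by omega⟩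
    rw [Finset.prod_Icc_succ_top (by omega : k+1 ≤ u+1), if_pos rfl,
      dh_diag_succ n k u (by omega), dd]
    congr 1
    refine Finset.prod_congr rfl fun j hj => ?_
    simp only [mem_Icc] at hj
    rw [if_neg (by omega)]

end WSR

namespace WSR2
open WSR

lemma prod_extract {n : ℕ} (S : Finset ℕ) (r : ℕ) (hr : r ∈ S) (f : ℕ → MvPolynomial (Fin n) ℚ) :
    ∏ i ∈ S, f i = f r * ∏ i ∈ S, (if i = r then 1 else f i) := by
  have h2 : ∏ i ∈ S, (if i = r then 1 else f i) = ∏ i ∈ S.erase r, f i := by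
    rw [← Finset.mul_prod_erase S (fun i => if i = r then 1 else f i) hr, if_pos rfl, one_mul]
    exact Finset.prod_congr rfl fun i hi => if_neg (Finset.ne_of_mem_erase hi)
  rw [h2, Finset.mul_prod_erase S f hr]

lemma rho_dd_lo (n k u a b : ℕ) (ha : u < a) (hb : u < b) (han : a < n) (hbn : b < n) :
    rename (sw n a b) (dd n k u) = dd n k u := by
  rw [dd, map_prod]
  refine Finset.prod_congr rfl fun j hj => ?_
  rw [map_prod]
  refine Finset.prod_congr rfl fun i hi => ?_
  simp only [mem_Icc] at hj; simp only [mem_Ico] at hi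
  rw [map_sub, rename_sw_v n a b i han hbn, rename_sw_v n a b j han hbn]
  split_ifs <;> first | rfl | (exfalso; omega)

lemma rho_dh_lo (n k r u a b : ℕ) (ha : u < a) (hb : u < b) (han : a < n) (hbn : b < n) :
    rename (sw n a b) (dh n k r u) = dh n k r u := by
  rw [dh, map_prod]
  refine Finset.prod_congr rfl fun j hj => ?_
  rw [map_prod]
  refine Finset.prod_congr rfl fun i hi => ?_
  simp only [mem_Icc] at hj; simp only [mem_Ico] at hi
  rw [apply_ite (rename (sw n a b)), map_one, map_sub,
    rename_sw_v n a b i han hbn, rename_sw_v n a b j han hbn]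
  split_ifs <;> first | rfl | (exfalso; omega)

lemma dh_succ' (n k r u : ℕ) (h : k ≤ u) (hr : r ≤ u) :
    dh n k r (u+1) = dh n k r u *
      ∏ i ∈ Ico k (u+1), (if i = r then 1 else v n i - v n (u+1)) := by
  rw [dh_succ n k r u h]
  congr 1
  refine Finset.prod_congr rfl fun i hi => ?_
  split_ifs <;> first | rfl | (exfalso; omega)

lemma rho_dh_step (n k r u : ℕ) (h : k ≤ u) (hr : r ≤ u) (hn : u + 2 < n) :
    rename (sw n (u+1) (u+2)) (dh n k r (u+1))
      = dh n k r u * ∏ i ∈ Ico k (u+1), (if i = r then 1 else v n i - v n (u+2)) := by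
  rw [dh_succ' n k r u h hr, map_mul, rho_dh_lo n k r u (u+1) (u+2) (by omega) (by omega)
    (by omega) (by omega), map_prod]
  congr 1
  refine Finset.prod_congr rfl fun i hi => ?_
  simp only [mem_Ico] at hi
  rw [apply_ite (rename (sw n (u+1) (u+2))), map_one, map_sub,
    rename_sw_v n (u+1) (u+2) i (by omega) (by omega),
    rename_sw_v n (u+1) (u+2) (u+1) (by omega) (by omega)]
  split_ifs <;> first | rfl | (exfalso; omega)

lemma rho_dh_diag (n k t : ℕ) (h : k ≤ t) (ht : t + 1 < n) :
    rename (sw n t (t+1)) (dh n k t t) = dh n k t t := by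
  rcases eq_or_lt_of_le h with rfl | hlt
  · simp [dh, Finset.Icc_eq_empty (by omega : ¬ k+1 ≤ k)]
  · obtain ⟨u, rfl⟩ : ∃ u, t = u + 1 := ⟨t - 1, by omega⟩
    rw [dh_diag_succ n k u (by omega),
      rho_dd_lo n k u (u+1) (u+2) (by omega) (by omega) (by omega) (by omega)]

end WSR2

namespace WSR3
open WSR

lemma sw_apply_coe (n a b : ℕ) (ha : a < n) (hb : b < n) (x : Fin n) :
    ((sw n a b x : Fin n) : ℕ)
      = if (x:ℕ) = a then b else if (x:ℕ) = b then a else (x:ℕ) := by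
  cases x with
  | mk i hi => rw [sw_apply n a b i ha hb hi]

lemma sw_inv (n a b : ℕ) : (sw n a b)⁻¹ = sw n a b := by
  rw [sw]
  split_ifs with h
  · exact Equiv.swap_inv _ _
  · rfl

lemma sw_self (n a : ℕ) : sw n a a = 1 := by
  rw [sw]
  split_ifs with h
  · exact Equiv.swap_self _
  · rfl

noncomputable def pairP (n c : ℕ) : MvPolynomial (Fin n) ℚ :=
  ∏ p ∈ Finset.univ.filter (fun p : Fin n × Fin n => c ≤ (p.1 : ℕ) ∧ p.1 < p.2),
    (X p.1 - X p.2)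

noncomputable def pairDh (n k r : ℕ) : MvPolynomial (Fin n) ℚ :=
  ∏ p ∈ Finset.univ.filter
      (fun p : Fin n × Fin n => k ≤ (p.1 : ℕ) ∧ p.1 < p.2 ∧ (p.1 : ℕ) ≠ r ∧ (p.2 : ℕ) ≠ r),
    (X p.1 - X p.2)

lemma rename_pairprod (n : ℕ) (σ : Equiv.Perm (Fin n)) (S S' : Finset (Fin n × Fin n))
    (h1 : ∀ p ∈ S, (σ p.1, σ p.2) ∈ S')
    (h2 : ∀ p ∈ S', (σ⁻¹ p.1, σ⁻¹ p.2) ∈ S) :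
    rename σ (∏ p ∈ S, (X p.1 - X p.2 : MvPolynomial (Fin n) ℚ))
      = ∏ p ∈ S', (X p.1 - X p.2) := by
  rw [map_prod]
  simp only [map_sub, rename_X]
  exact Finset.prod_nbij' (fun p => (σ p.1, σ p.2)) (fun p => (σ⁻¹ p.1, σ⁻¹ p.2))
    h1 h2 (by intro a _; simp) (by intro a _; simp) (by intro a _; rfl)

end WSR3

namespace WSR3
open WSR

lemma mem_pairset (n c : ℕ) (p : Fin n × Fin n) :
    (p ∈ Finset.univ.filter (fun p : Fin n × Fin n => c ≤ (p.1 : ℕ) ∧ p.1 < p.2))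
      ↔ (c ≤ (p.1 : ℕ) ∧ (p.1 : ℕ) < (p.2 : ℕ)) := by
  simp only [Finset.mem_filter, Finset.mem_univ, true_and, Fin.lt_def]

lemma pair_ne_iff {n : ℕ} (p q : Fin n × Fin n) :
    p ≠ q ↔ ¬((p.1 : ℕ) = (q.1 : ℕ) ∧ (p.2 : ℕ) = (q.2 : ℕ)) := by
  simp [Prod.ext_iff, Fin.ext_iff]

lemma rho_pairP_adj (n c m : ℕ) (hm : c ≤ m) (hmn : m + 2 ≤ n) :
    rename (sw n m (m+1)) (pairP n c) = - pairP n c := by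
  have hmn' : m < n := by omega
  have hm1n : m + 1 < n := by omega
  have hp0mem : ((⟨m, hmn'⟩, ⟨m+1, hm1n⟩) : Fin n × Fin n) ∈ Finset.univ.filter
      (fun p : Fin n × Fin n => c ≤ (p.1 : ℕ) ∧ p.1 < p.2) := by
    rw [mem_pairset]
    constructor <;> simp <;> omega
  rw [pairP, ← Finset.mul_prod_erase _ _ hp0mem, map_mul]
  have hrest : rename (sw n m (m+1))
      (∏ p ∈ (Finset.univ.filter
        (fun p : Fin n × Fin n => c ≤ (p.1 : ℕ) ∧ p.1 < p.2)).erase (⟨m, hmn'⟩, ⟨m+1, hm1n⟩),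
        (X p.1 - X p.2 : MvPolynomial (Fin n) ℚ))
      = ∏ p ∈ (Finset.univ.filter
        (fun p : Fin n × Fin n => c ≤ (p.1 : ℕ) ∧ p.1 < p.2)).erase (⟨m, hmn'⟩, ⟨m+1, hm1n⟩),
        (X p.1 - X p.2) := by
    apply rename_pairprod
    · intro p hp
      rw [Finset.mem_erase, mem_pairset, pair_ne_iff] at hp ⊢
      simp only [Fin.val_mk] at hp ⊢
      rw [sw_apply_coe n m (m+1) hmn' hm1n, sw_apply_coe n m (m+1) hmn' hm1n]
      split_ifs <;> omega
    · intro p hp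
      rw [sw_inv]
      rw [Finset.mem_erase, mem_pairset, pair_ne_iff] at hp ⊢
      simp only [Fin.val_mk] at hp ⊢
      rw [sw_apply_coe n m (m+1) hmn' hm1n, sw_apply_coe n m (m+1) hmn' hm1n]
      split_ifs <;> omega
  rw [hrest, map_sub, rename_X, rename_X]
  have h1 : sw n m (m+1) (⟨m, hmn'⟩ : Fin n) = ⟨m+1, hm1n⟩ := by
    apply Fin.ext
    rw [sw_apply_coe n m (m+1) hmn' hm1n]
    simp
  have h2 : sw n m (m+1) (⟨m+1, hm1n⟩ : Fin n) = ⟨m, hmn'⟩ := by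
    apply Fin.ext
    rw [sw_apply_coe n m (m+1) hmn' hm1n]
    simp
  rw [h1, h2]
  ring
end WSR3

namespace WSR3
open WSR

lemma mem_pairdh (n k r : ℕ) (p : Fin n × Fin n) :
    (p ∈ Finset.univ.filter
      (fun p : Fin n × Fin n => k ≤ (p.1 : ℕ) ∧ p.1 < p.2 ∧ (p.1 : ℕ) ≠ r ∧ (p.2 : ℕ) ≠ r))
      ↔ (k ≤ (p.1 : ℕ) ∧ (p.1 : ℕ) < (p.2 : ℕ) ∧ (p.1 : ℕ) ≠ r ∧ (p.2 : ℕ) ≠ r) := by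
  simp only [Finset.mem_filter, Finset.mem_univ, true_and, Fin.lt_def]

lemma pairDh_base (n k : ℕ) : pairDh n k k = pairP n (k+1) := by
  rw [pairDh, pairP]
  apply Finset.prod_congr _ (fun _ _ => rfl)
  apply Finset.filter_congr
  intro p _
  simp only [Fin.lt_def]
  constructor
  · rintro ⟨h1, h2, h3, h4⟩; exact ⟨by omega, by omega⟩
  · rintro ⟨h1, h2⟩; exact ⟨by omega, by omega, by omega, by omega⟩

lemma rho_pairP_base (n k : ℕ) (hn : k + 2 ≤ n) :
    rename (sw n k (k+1)) (pairP n (k+1)) = pairDh n k (k+1) := by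
  rw [pairP, pairDh]
  apply rename_pairprod
  · intro p hp
    rw [mem_pairset] at hp
    rw [mem_pairdh]
    simp only []
    rw [sw_apply_coe n k (k+1) (by omega) (by omega), sw_apply_coe n k (k+1) (by omega) (by omega)]
    split_ifs <;> omega
  · intro p hp
    rw [sw_inv]
    rw [mem_pairdh] at hp
    rw [mem_pairset]
    rw [sw_apply_coe n k (k+1) (by omega) (by omega), sw_apply_coe n k (k+1) (by omega) (by omega)]
    split_ifs <;> omega

lemma rho_pairDh_step (n k r : ℕ) (hk : k + 1 ≤ r) (hn : r + 2 ≤ n) :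
    rename (sw n r (r+1)) (pairDh n k r) = pairDh n k (r+1) := by
  rw [pairDh, pairDh]
  apply rename_pairprod
  · intro p hp
    rw [mem_pairdh] at hp
    rw [mem_pairdh]
    rw [sw_apply_coe n r (r+1) (by omega) (by omega), sw_apply_coe n r (r+1) (by omega) (by omega)]
    split_ifs <;> omega
  · intro p hp
    rw [sw_inv]
    rw [mem_pairdh] at hp
    rw [mem_pairdh]
    rw [sw_apply_coe n r (r+1) (by omega) (by omega), sw_apply_coe n r (r+1) (by omega) (by omega)]
    split_ifs <;> omega

lemma sw_conj (n k r : ℕ) (hk : k < r) (hr : r + 1 < n) :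
    sw n k (r+1) = (sw n r (r+1)) * ((sw n k r) * (sw n r (r+1))) := by
  apply Equiv.ext
  intro x
  apply Fin.ext
  simp only [Equiv.Perm.coe_mul, Function.comp_apply]
  rw [sw_apply_coe n r (r+1) (by omega) (by omega)]
  conv_lhs => rw [sw_apply_coe n k (r+1) (by omega) (by omega)]
  have h1 := sw_apply_coe n r (r+1) (by omega : r < n) (by omega : r+1 < n) x
  -- rewrite innermost: need coe of (sw n r (r+1) x) inside sw_apply_coe of (sw n k r)
  rw [sw_apply_coe n k r (by omega) (by omega), h1]
  split_ifs <;> omega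

lemma chainD (n k : ℕ) (r : ℕ) (hk : k + 1 ≤ r) (hr : r < n) :
    rename (sw n k r) (pairP n (k+1))
      = (-1 : MvPolynomial (Fin n) ℚ) ^ (r - k - 1) * pairDh n k r := by
  induction r with
  | zero => omega
  | succ u ih =>
    rcases eq_or_lt_of_le hk with heq | hlt
    · have hu : u = k := by omega
      subst hu
      have h0 : u + 1 - u - 1 = 0 := by omega
      rw [h0, pow_zero, one_mul]
      exact rho_pairP_base n u (by omega)
    · have hku : k + 1 ≤ u := by omega
      have hun : u < n := by omega
      rw [sw_conj n k u (by omega) (by omega)]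
      have hcomp : ∀ (q : MvPolynomial (Fin n) ℚ),
          rename (⇑(sw n u (u+1) * (sw n k u * sw n u (u+1)))) q
            = rename (sw n u (u+1)) (rename (sw n k u) (rename (sw n u (u+1)) q)) := by
        intro q
        rw [rename_rename, rename_rename]
        rfl
      rw [hcomp, rho_pairP_adj n (k+1) u (by omega) (by omega), map_neg, map_neg,
        ih hku hun, map_mul, rho_pairDh_step n k u (by omega) (by omega)]
      have hpow : rename (sw n u (u+1)) ((-1 : MvPolynomial (Fin n) ℚ) ^ (u - k - 1))
          = (-1 : MvPolynomial (Fin n) ℚ) ^ (u - k - 1) := by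
        rw [map_pow, map_neg, map_one]
      rw [hpow]
      have : u + 1 - k - 1 = (u - k - 1) + 1 := by omega
      rw [this, pow_succ]
      ring
end WSR3

namespace WSR3
open WSR

lemma v_eq_X (n : ℕ) (hn : 0 < n) (a : ℕ) (h : a < n) :
    v n a = X (⟨a % n, Nat.mod_lt _ hn⟩ : Fin n) := by
  rw [v, dif_pos h]
  congr 1
  exact Fin.ext (Nat.mod_eq_of_lt h).symm

lemma bridge1 (n c : ℕ) (hn : 0 < n) : dd n c (n-1) = pairP n c := by
  rw [dd, pairP, Finset.prod_sigma']
  refine Finset.prod_nbij'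
    (fun x : Σ _ : ℕ, ℕ => ((⟨x.2 % n, Nat.mod_lt _ hn⟩ : Fin n), (⟨x.1 % n, Nat.mod_lt _ hn⟩ : Fin n)))
    (fun p : Fin n × Fin n => (⟨(p.2 : ℕ), (p.1 : ℕ)⟩ : Σ _ : ℕ, ℕ)) ?_ ?_ ?_ ?_ ?_
  · intro x hx
    simp only [Finset.mem_sigma, mem_Icc, mem_Ico] at hx
    rw [mem_pairset]
    simp only [Fin.val_mk]
    rw [Nat.mod_eq_of_lt (by omega), Nat.mod_eq_of_lt (by omega)]
    omega
  · intro p hp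
    rw [mem_pairset] at hp
    simp only [Finset.mem_sigma, mem_Icc, mem_Ico]
    have := p.1.isLt
    have := p.2.isLt
    omega
  · intro x hx
    simp only [Finset.mem_sigma, mem_Icc, mem_Ico] at hx
    refine Sigma.ext ?_ (heq_of_eq ?_) <;> simp only [Fin.val_mk] <;>
      rw [Nat.mod_eq_of_lt (by omega)]
  · intro p hp
    refine Prod.ext ?_ ?_ <;> exact Fin.ext (by simp [Nat.mod_eq_of_lt (Fin.isLt _)])
  · intro x hx
    simp only [Finset.mem_sigma, mem_Icc, mem_Ico] at hx
    rw [v_eq_X n hn x.2 (by omega), v_eq_X n hn x.1 (by omega)]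

lemma bridge2 (n k r : ℕ) (hn : 0 < n) : dh n k r (n-1) = pairDh n k r := by
  rw [dh, pairDh, Finset.prod_sigma']
  have step1 : (∏ x ∈ (Icc (k+1) (n-1)).sigma (fun j => Ico k j),
        (if x.2 = r ∨ x.1 = r then 1 else v n x.2 - v n x.1))
      = ∏ x ∈ ((Icc (k+1) (n-1)).sigma (fun j => Ico k j)).filter
          (fun x => ¬(x.2 = r ∨ x.1 = r)), (v n x.2 - v n x.1) := by
    rw [Finset.prod_filter]
    refine Finset.prod_congr rfl fun x _ => ?_
    rw [ite_not]
  rw [step1]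
  refine Finset.prod_nbij'
    (fun x : Σ _ : ℕ, ℕ => ((⟨x.2 % n, Nat.mod_lt _ hn⟩ : Fin n), (⟨x.1 % n, Nat.mod_lt _ hn⟩ : Fin n)))
    (fun p : Fin n × Fin n => (⟨(p.2 : ℕ), (p.1 : ℕ)⟩ : Σ _ : ℕ, ℕ)) ?_ ?_ ?_ ?_ ?_
  · intro x hx
    simp only [Finset.mem_filter, Finset.mem_sigma, mem_Icc, mem_Ico] at hx
    rw [mem_pairdh]
    simp only [Fin.val_mk]
    rw [Nat.mod_eq_of_lt (by omega), Nat.mod_eq_of_lt (by omega)]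
    omega
  · intro p hp
    rw [mem_pairdh] at hp
    simp only [Finset.mem_filter, Finset.mem_sigma, mem_Icc, mem_Ico]
    have := p.1.isLt
    have := p.2.isLt
    omega
  · intro x hx
    simp only [Finset.mem_filter, Finset.mem_sigma, mem_Icc, mem_Ico] at hx
    refine Sigma.ext ?_ (heq_of_eq ?_) <;> simp only [Fin.val_mk] <;>
      rw [Nat.mod_eq_of_lt (by omega)]
  · intro p hp
    refine Prod.ext ?_ ?_ <;> exact Fin.ext (by simp [Nat.mod_eq_of_lt (Fin.isLt _)])
  · intro x hx
    simp only [Finset.mem_filter, Finset.mem_sigma, mem_Icc, mem_Ico] at hx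
    rw [v_eq_X n hn x.2 (by omega), v_eq_X n hn x.1 (by omega)]
end WSR3

namespace WSR4
open WSR WSR2 WSR3

lemma rename_swkr_pow (n k r e : ℕ) (hkn : k < n) (hrn : r < n)
    (G : MvPolynomial (Fin n) ℚ) :
    rename (sw n k r) (v n k ^ (e+1) * G)
      = v n r * rename (sw n k r) (v n k ^ e * G) := by
  have : v n k ^ (e+1) * G = v n k * (v n k ^ e * G) := by ring
  rw [this, map_mul, rename_sw_v n k r k hkn hrn, if_pos rfl]

lemma per_term (n k t r : ℕ) (hkr : k ≤ r) (hrt : r ≤ t) (ht : t + 2 ≤ n)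
    (G : MvPolynomial (Fin n) ℚ) :
    (∏ i ∈ Ico k (t+1), (v n i - v n (t+1))) * v n t
        * ((-1 : MvPolynomial (Fin n) ℚ)^(r-k) * dh n k r t
          * rename (sw n k r) (v n k ^ (t-k) * G))
      - (∏ i ∈ Ico k t, (v n i - v n t)) * (v n t - v n (t+1)) * v n (t+1)
        * ((-1 : MvPolynomial (Fin n) ℚ)^(r-k) * rename (sw n t (t+1)) (dh n k r t)
          * rename (sw n k (if r = t then t+1 else r)) (v n k ^ (t-k) * G))
      = (v n t - v n (t+1)) * ((-1 : MvPolynomial (Fin n) ℚ)^(r-k) * dh n k r (t+1)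
          * rename (sw n k r) (v n k ^ (t+1-k) * G))
        + (if r = t then (v n t - v n (t+1)) * ((-1 : MvPolynomial (Fin n) ℚ)^(t+1-k)
            * dh n k (t+1) (t+1) * rename (sw n k (t+1)) (v n k ^ (t+1-k) * G)) else 0) := by
  have hkn : k < n := by omega
  have htn : t < n := by omega
  have ht1n : t + 1 < n := by omega
  have hpow1 : t + 1 - k = (t - k) + 1 := by omega
  rcases eq_or_lt_of_le hrt with rfl | hlt
  · -- r = t case
    rw [if_pos rfl, if_pos rfl]
    rw [rho_dh_diag n k r (by omega) (by omega)]
    rw [hpow1, rename_swkr_pow n k r (r-k) hkn (by omega),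
      rename_swkr_pow n k (r+1) (r-k) hkn (by omega)]
    -- dh n k r (r+1) = dh n k r r * C'
    have hC : (∏ i ∈ Ico k (r+1), (v n i - v n (r+1)))
        = (∏ i ∈ Ico k r, (v n i - v n (r+1))) * (v n r - v n (r+1)) := by
      rw [Finset.prod_Ico_succ_top hkr]
    have hdh1 : dh n k r (r+1) = dh n k r r * ∏ i ∈ Ico k r, (v n i - v n (r+1)) := by
      rw [dh_succ' n k r r hkr le_rfl]
      congr 1
      rw [Finset.prod_Ico_succ_top hkr, if_pos rfl, mul_one]
      refine Finset.prod_congr rfl fun i hi => ?_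
      simp only [mem_Ico] at hi
      rw [if_neg (by omega)]
    have hdh2 : dh n k (r+1) (r+1) = dh n k r r * ∏ i ∈ Ico k r, (v n i - v n r) := by
      rw [dh_diag_succ n k r hkr, dd_eq_dh_diag n k r hkr]
    have hsign : (-1 : MvPolynomial (Fin n) ℚ)^(r-k+1) = -(-1 : MvPolynomial (Fin n) ℚ)^(r-k) := by
      rw [pow_succ]
      ring
    rw [hC, hdh1, hdh2, hsign]
    ring
  · -- r < t case
    obtain ⟨u, rfl⟩ : ∃ u, t = u + 1 := ⟨t - 1, by omega⟩
    have hru : r ≤ u := by omega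
    have hku : k ≤ u := by omega
    rw [if_neg (by omega), if_neg (by omega)]
    simp only [show u+1+1 = u+2 from rfl]
    rw [hpow1, rename_swkr_pow n k r (u+1-k) hkn (by omega)]
    have hF : dh n k r (u+1) = dh n k r u * ∏ i ∈ Ico k (u+1),
        (if i = r then 1 else v n i - v n (u+1)) := dh_succ' n k r u hku hru
    have hF2 : rename (sw n (u+1) (u+2)) (dh n k r (u+1))
        = dh n k r u * ∏ i ∈ Ico k (u+1), (if i = r then 1 else v n i - v n (u+2)) :=
      rho_dh_step n k r u hku hru (by omega)
    have hdh3 : dh n k r (u+2) = dh n k r u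
        * (∏ i ∈ Ico k (u+1), (if i = r then 1 else v n i - v n (u+1)))
        * ((∏ i ∈ Ico k (u+1), (if i = r then 1 else v n i - v n (u+2)))
            * (v n (u+1) - v n (u+2))) := by
      rw [dh_succ' n k r (u+1) (by omega) (by omega), hF]
      rw [Finset.prod_Ico_succ_top (by omega : k ≤ u+1), if_neg (by omega)]
    have hC : (∏ i ∈ Ico k (u+2), (v n i - v n (u+2)))
        = (v n r - v n (u+2)) * ((∏ i ∈ Ico k (u+1), (if i = r then 1 else v n i - v n (u+2)))
            * (v n (u+1) - v n (u+2))) := by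
      rw [prod_extract (Ico k (u+2)) r (by simp only [mem_Ico]; omega) _]
      rw [Finset.prod_Ico_succ_top (by omega : k ≤ u+1), if_neg (by omega)]
    have hB : (∏ i ∈ Ico k (u+1), (v n i - v n (u+1)))
        = (v n r - v n (u+1)) * ∏ i ∈ Ico k (u+1), (if i = r then 1 else v n i - v n (u+1)) := by
      rw [prod_extract (Ico k (u+1)) r (by simp only [mem_Ico]; omega) _]
    rw [hF2, hF, hdh3, hC, hB]
    ring
end WSR4

namespace WSR4
open WSR WSR2 WSR3

lemma sw_comm (n a b c d : ℕ) (h : ({a,b} : Set ℕ) ∩ {c,d} = ∅)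
    (ha : a < n) (hb : b < n) (hc : c < n) (hd : d < n) :
    (sw n a b) * (sw n c d) = (sw n c d) * (sw n a b) := by
  have hac : a ≠ c := by intro hh; subst hh; have : a ∈ ({a,b} : Set ℕ) ∩ {a,d} := by simp
                         rw [h] at this; exact this
  have had : a ≠ d := by intro hh; subst hh; have : a ∈ ({a,b} : Set ℕ) ∩ {c,a} := by simp
                         rw [h] at this; exact this
  have hbc : b ≠ c := by intro hh; subst hh; have : b ∈ ({a,b} : Set ℕ) ∩ {b,d} := by simp
                         rw [h] at this; exact this
  have hbd : b ≠ d := by intro hh; subst hh; have : b ∈ ({a,b} : Set ℕ) ∩ {c,b} := by simp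
                         rw [h] at this; exact this
  apply Equiv.ext
  intro x
  apply Fin.ext
  simp only [Equiv.Perm.coe_mul, Function.comp_apply]
  rw [sw_apply_coe n a b ha hb, sw_apply_coe n c d hc hd,
    sw_apply_coe n c d hc hd, sw_apply_coe n a b ha hb]
  split_ifs <;> omega

lemma sw_braid (n k t : ℕ) (hkt : k < t) (ht1 : t + 1 < n) :
    (sw n t (t+1)) * (sw n k t) = (sw n k (t+1)) * (sw n t (t+1)) := by
  apply Equiv.ext
  intro x
  apply Fin.ext
  simp only [Equiv.Perm.coe_mul, Function.comp_apply]
  rw [sw_apply_coe n t (t+1) (by omega) (by omega), sw_apply_coe n k t (by omega) (by omega),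
    sw_apply_coe n k (t+1) (by omega) (by omega), sw_apply_coe n t (t+1) (by omega) (by omega)]
  split_ifs <;> omega

lemma hUr (n k t r : ℕ) (G : MvPolynomial (Fin n) ℚ)
    (hGsym : ∀ m, k+1 ≤ m → m+2 ≤ n → rename (sw n m (m+1)) G = G)
    (hkr : k ≤ r) (hrt : r ≤ t) (ht : t + 2 ≤ n) :
    rename (sw n t (t+1)) (rename (sw n k r) (v n k ^ (t-k) * G))
      = rename (sw n k (if r = t then t+1 else r)) (v n k ^ (t-k) * G) := by
  have hρfix : k + 1 ≤ t → rename (sw n t (t+1)) (v n k ^ (t-k) * G) = v n k ^ (t-k) * G := by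
    intro h
    rw [map_mul, map_pow, rename_sw_v n t (t+1) k (by omega) (by omega),
      if_neg (by omega), if_neg (by omega), hGsym t h (by omega)]
  by_cases hr : r = t
  · subst hr
    rw [if_pos rfl]
    by_cases htk : r = k
    · subst htk
      rw [sw_self, Equiv.Perm.coe_one, rename_id_apply]
    · rw [rename_rename, ← Equiv.Perm.coe_mul, sw_braid n k r (by omega) (by omega),
        Equiv.Perm.coe_mul, ← rename_rename, hρfix (by omega)]
  · rw [if_neg hr]
    have hrt' : r < t := by omega
    by_cases hrk : r = k
    · subst hrk
      rw [sw_self, Equiv.Perm.coe_one, rename_id_apply]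
      exact hρfix (by omega)
    · rw [rename_rename, ← Equiv.Perm.coe_mul,
        sw_comm n t (t+1) k r (by ext x; simp; omega) (by omega) (by omega) (by omega) (by omega),
        Equiv.Perm.coe_mul, ← rename_rename, hρfix (by omega)]
end WSR4

namespace WSR4
open WSR WSR2 WSR3

lemma claim_main (n k : ℕ) (hk : k + 1 ≤ n) (G : MvPolynomial (Fin n) ℚ)
    (xi : ℕ → MvPolynomial (Fin n) ℚ → MvPolynomial (Fin n) ℚ)
    (hxi' : ∀ t, t + 1 < n → ∀ g, (v n t - v n (t+1)) * xi t g
        = v n t * g - v n (t+1) * rename (sw n t (t+1)) g)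
    (hGsym : ∀ m, k+1 ≤ m → m+2 ≤ n → rename (sw n m (m+1)) G = G) :
    ∀ t (hkt : k ≤ t), t ≤ n - 1 →
      dd n k t * ((List.range' k (t - k)).foldl (fun g m => xi m g) G)
        = ∑ r ∈ Icc k t, (-1 : MvPolynomial (Fin n) ℚ)^(r-k) * dh n k r t
            * rename (sw n k r) (v n k ^ (t-k) * G) := by
  intro t hkt
  induction t, hkt using Nat.le_induction with
  | base =>
    intro _
    have h1 : k - k = 0 := by omega
    rw [h1]
    simp only [List.range'_zero, List.foldl_nil]
    rw [dd, Finset.Icc_eq_empty (by omega : ¬ k + 1 ≤ k), Finset.prod_empty, one_mul,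
      Finset.Icc_self, Finset.sum_singleton, dh,
      Finset.Icc_eq_empty (by omega : ¬ k + 1 ≤ k), Finset.prod_empty,
      sw_self, Equiv.Perm.coe_one, rename_id_apply]
    rw [h1, pow_zero]
    ring
  | succ t hkt IH =>
    intro ht1
    have hIH := IH (by omega)
    have ht2n : t + 2 ≤ n := by omega
    have hfold : (List.range' k (t+1-k)).foldl (fun g m => xi m g) G
        = xi t ((List.range' k (t-k)).foldl (fun g m => xi m g) G) := by
      have h2 : t + 1 - k = (t - k) + 1 := by omega
      rw [h2, show List.range' k ((t-k)+1) = List.range' k (t-k) ++ [k + (t-k)] by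
        simpa using List.range'_concat (step := 1) (s := k) (n := t-k), List.foldl_append]
      simp only [List.foldl_cons, List.foldl_nil]
      rw [show k + (t - k) = t by omega]
    rw [hfold]
    set gt := (List.range' k (t - k)).foldl (fun g m => xi m g) G with hg
    apply mul_left_cancel₀ (v_sub_ne n t (t+1) (by omega) (by omega) (by omega))
    have hx := hxi' t (by omega) gt
    -- decompositions of dd n k (t+1)
    have hCsplit : (∏ i ∈ Ico k (t+1), (v n i - v n (t+1)))
        = (∏ i ∈ Ico k t, (v n i - v n (t+1))) * (v n t - v n (t+1)) :=
      Finset.prod_Ico_succ_top hkt _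
    have hdd1 : dd n k (t+1) = dd n k t * ∏ i ∈ Ico k (t+1), (v n i - v n (t+1)) :=
      dd_succ n k t hkt
    have hdd2 : dd n k (t+1) = (dh n k t t * ∏ i ∈ Ico k t, (v n i - v n (t+1)))
        * ((∏ i ∈ Ico k t, (v n i - v n t)) * (v n t - v n (t+1))) := by
      rw [hdd1, hCsplit, dd_eq_dh_diag n k t hkt]
      ring
    -- renamed IH
    have hρ : (dh n k t t * ∏ i ∈ Ico k t, (v n i - v n (t+1)))
          * rename (sw n t (t+1)) gt
        = ∑ r ∈ Icc k t, (-1 : MvPolynomial (Fin n) ℚ)^(r-k)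
            * rename (sw n t (t+1)) (dh n k r t)
            * rename (sw n k (if r = t then t+1 else r)) (v n k ^ (t-k) * G) := by
      have h3 := congrArg (rename (sw n t (t+1))) hIH
      rw [map_mul, rho_dd n k t hkt (by omega), map_sum] at h3
      rw [h3]
      refine Finset.sum_congr rfl fun r hr => ?_
      simp only [mem_Icc] at hr
      rw [map_mul, map_mul, map_pow, map_neg, map_one,
        hUr n k t r G hGsym (by omega) (by omega) ht2n]
    calc (v n t - v n (t+1)) * (dd n k (t+1) * xi t gt)
        = dd n k (t+1) * ((v n t - v n (t+1)) * xi t gt) := by ring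
      _ = dd n k (t+1) * (v n t * gt
            - v n (t+1) * rename (sw n t (t+1)) gt) := by rw [hx]
      _ = (∏ i ∈ Ico k (t+1), (v n i - v n (t+1))) * v n t * (dd n k t * gt)
          - (∏ i ∈ Ico k t, (v n i - v n t)) * (v n t - v n (t+1)) * v n (t+1)
            * ((dh n k t t * ∏ i ∈ Ico k t, (v n i - v n (t+1)))
                * rename (sw n t (t+1)) gt) := by
          conv_lhs => rw [mul_sub]
          refine congrArg₂ (· - ·) ?_ ?_
          · rw [hdd1]; ring
          · rw [hdd2]; ring
      _ = ∑ r ∈ Icc k t,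
            ((∏ i ∈ Ico k (t+1), (v n i - v n (t+1))) * v n t
              * ((-1 : MvPolynomial (Fin n) ℚ)^(r-k) * dh n k r t
                * rename (sw n k r) (v n k ^ (t-k) * G))
            - (∏ i ∈ Ico k t, (v n i - v n t)) * (v n t - v n (t+1)) * v n (t+1)
              * ((-1 : MvPolynomial (Fin n) ℚ)^(r-k)
                * rename (sw n t (t+1)) (dh n k r t)
                * rename (sw n k (if r = t then t+1 else r)) (v n k ^ (t-k) * G))) := by
          rw [hIH, hρ, Finset.sum_sub_distrib, Finset.mul_sum, Finset.mul_sum]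
      _ = ∑ r ∈ Icc k t,
            ((v n t - v n (t+1)) * ((-1 : MvPolynomial (Fin n) ℚ)^(r-k) * dh n k r (t+1)
                * rename (sw n k r) (v n k ^ (t+1-k) * G))
              + (if r = t then (v n t - v n (t+1))
                  * ((-1 : MvPolynomial (Fin n) ℚ)^(t+1-k) * dh n k (t+1) (t+1)
                    * rename (sw n k (t+1)) (v n k ^ (t+1-k) * G)) else 0)) := by
          refine Finset.sum_congr rfl fun r hr => ?_
          simp only [mem_Icc] at hr
          exact per_term n k t r hr.1 hr.2 ht2n G
      _ = (v n t - v n (t+1)) * ∑ r ∈ Icc k (t+1),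
            (-1 : MvPolynomial (Fin n) ℚ)^(r-k) * dh n k r (t+1)
              * rename (sw n k r) (v n k ^ (t+1-k) * G) := by
          rw [Finset.sum_add_distrib,
            Finset.sum_ite_eq' (Icc k t) t (fun _ => (v n t - v n (t+1))
              * ((-1 : MvPolynomial (Fin n) ℚ)^(t+1-k) * dh n k (t+1) (t+1)
                * rename (sw n k (t+1)) (v n k ^ (t+1-k) * G))),
            if_pos (by simp only [mem_Icc]; omega),
            Finset.sum_Icc_succ_top (by omega : k ≤ t+1), mul_add, Finset.mul_sum]
end WSR4

namespace WSR5
open WSR WSR2 WSR3 WSR4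

lemma pairP_ne (n c : ℕ) : pairP n c ≠ 0 := by
  rw [pairP]
  rw [Finset.prod_ne_zero_iff]
  intro p hp
  rw [mem_pairset] at hp
  rw [sub_ne_zero]
  intro hh
  have := MvPolynomial.X_injective (R := ℚ) hh
  rw [Fin.ext_iff] at this
  omega

lemma sign_sw (n a b : ℕ) (ha : a < n) (hb : b < n) (hne : a ≠ b) :
    Equiv.Perm.sign (sw n a b) = -1 := by
  rw [sw, dif_pos ⟨ha, hb⟩]
  exact Equiv.Perm.sign_swap (by simp [Fin.ext_iff]; omega)

lemma sw_mul_self (n a b : ℕ) : sw n a b * sw n a b = 1 := by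
  rw [sw]
  split_ifs with h
  · exact Equiv.swap_mul_self _ _
  · exact one_mul 1

lemma sw_fix (n a b : ℕ) (ha : a < n) (hb : b < n) (i : Fin n)
    (hia : (i : ℕ) ≠ a) (hib : (i : ℕ) ≠ b) : sw n a b i = i := by
  apply Fin.ext
  rw [sw_apply_coe n a b ha hb, if_neg hia, if_neg hib]

noncomputable def MM (n c : ℕ) : MvPolynomial (Fin n) ℚ :=
  ∏ j : Fin n, X j ^ (if (j : ℕ) < c then 0 else n - 1 - (j : ℕ))

lemma MM_split (n k : ℕ) (hk : k < n) :
    v n k ^ (n - 1 - k) * MM n (k+1) = MM n k := by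
  rw [MM, MM, ← Finset.mul_prod_erase Finset.univ _ (Finset.mem_univ (⟨k, hk⟩ : Fin n)),
    ← Finset.mul_prod_erase Finset.univ
      (fun j : Fin n => X j ^ (if (j : ℕ) < k then 0 else n - 1 - (j : ℕ)))
      (Finset.mem_univ (⟨k, hk⟩ : Fin n))]
  have h1 : (∏ j ∈ Finset.univ.erase (⟨k, hk⟩ : Fin n),
        X j ^ (if (j : ℕ) < k + 1 then 0 else n - 1 - (j : ℕ)))
      = ∏ j ∈ Finset.univ.erase (⟨k, hk⟩ : Fin n),
        (X j ^ (if (j : ℕ) < k then 0 else n - 1 - (j : ℕ)) : MvPolynomial (Fin n) ℚ) := by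
    refine Finset.prod_congr rfl fun j hj => ?_
    have hj' : (j : ℕ) ≠ k := by
      intro hh
      exact (Finset.ne_of_mem_erase hj) (Fin.ext hh)
    congr 1
    split_ifs <;> first | rfl | omega
  rw [h1]
  simp only [Fin.val_mk, if_pos (by omega : k < k + 1), if_neg (by omega : ¬ k < k), pow_zero]
  rw [v, dif_pos hk]
  ring

lemma Gsym_of (n c : ℕ) (G H : MvPolynomial (Fin n) ℚ)
    (heq : pairP n c * G = ∑ σ ∈ Finset.univ.filter
        (fun σ : Equiv.Perm (Fin n) => ∀ i : Fin n, (i : ℕ) < c → σ i = i),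
        (Equiv.Perm.sign σ : ℤ) • rename σ H)
    (m : ℕ) (hm : c ≤ m) (hm2 : m + 2 ≤ n) : rename (sw n m (m+1)) G = G := by
  have hswfix : ∀ i : Fin n, (i : ℕ) < c → sw n m (m+1) i = i := fun i hi =>
    sw_fix n m (m+1) (by omega) (by omega) i (by omega) (by omega)
  have hanti : rename (sw n m (m+1)) (∑ σ ∈ Finset.univ.filter
        (fun σ : Equiv.Perm (Fin n) => ∀ i : Fin n, (i : ℕ) < c → σ i = i),
        (Equiv.Perm.sign σ : ℤ) • rename σ H)
      = -(∑ σ ∈ Finset.univ.filter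
        (fun σ : Equiv.Perm (Fin n) => ∀ i : Fin n, (i : ℕ) < c → σ i = i),
        (Equiv.Perm.sign σ : ℤ) • rename σ H) := by
    rw [map_sum, ← Finset.sum_neg_distrib]
    refine Finset.sum_nbij' (fun σ => sw n m (m+1) * σ) (fun σ => sw n m (m+1) * σ)
      ?_ ?_ ?_ ?_ ?_
    · intro σ hσ
      simp only [Finset.mem_filter, Finset.mem_univ, true_and] at hσ ⊢
      intro i hi
      rw [Equiv.Perm.mul_apply, hσ i hi, hswfix i hi]
    · intro σ hσ
      simp only [Finset.mem_filter, Finset.mem_univ, true_and] at hσ ⊢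
      intro i hi
      rw [Equiv.Perm.mul_apply, hσ i hi, hswfix i hi]
    · intro σ _
      show sw n m (m+1) * (sw n m (m+1) * σ) = σ
      rw [← mul_assoc, sw_mul_self, one_mul]
    · intro σ _
      show sw n m (m+1) * (sw n m (m+1) * σ) = σ
      rw [← mul_assoc, sw_mul_self, one_mul]
    · intro σ hσ
      rw [map_zsmul, rename_rename]
      have hs : Equiv.Perm.sign (sw n m (m+1) * σ) = - Equiv.Perm.sign σ := by
        rw [Equiv.Perm.sign_mul, sign_sw n m (m+1) (by omega) (by omega) (by omega), neg_one_mul]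
      rw [Equiv.Perm.coe_mul]
      rw [hs]
      push_cast
      rw [neg_smul, neg_neg]
  have h3 := congrArg (rename (sw n m (m+1))) heq
  rw [map_mul, rho_pairP_adj n c m hm hm2, hanti, ← heq] at h3
  rw [neg_mul] at h3
  exact mul_left_cancel₀ (pairP_ne n c) (neg_injective h3)
end WSR5

namespace WSR5
open WSR WSR2 WSR3 WSR4

lemma final_sum (n k : ℕ) (hk : k + 1 ≤ n) (G f : MvPolynomial (Fin n) ℚ)
    (heq1 : pairP n (k+1) * G = ∑ σ ∈ Finset.univ.filter
        (fun σ : Equiv.Perm (Fin n) => ∀ i : Fin n, (i : ℕ) < k + 1 → σ i = i),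
        (Equiv.Perm.sign σ : ℤ) • rename σ (MM n (k+1) * f)) :
    ∑ r ∈ Icc k (n-1), (-1 : MvPolynomial (Fin n) ℚ)^(r-k) * dh n k r (n-1)
        * rename (sw n k r) (v n k ^ (n-1-k) * G)
      = ∑ σ ∈ Finset.univ.filter
          (fun σ : Equiv.Perm (Fin n) => ∀ i : Fin n, (i : ℕ) < k → σ i = i),
          (Equiv.Perm.sign σ : ℤ) • rename σ (MM n k * f) := by
  have hkn : k < n := by omega
  have hn0 : 0 < n := by omega
  have hvmk : ((⟨k, hkn⟩ : Fin n) : ℕ) = k := rfl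
  have hper : ∀ r ∈ Icc k (n-1),
      (-1 : MvPolynomial (Fin n) ℚ)^(r-k) * dh n k r (n-1)
          * rename (sw n k r) (v n k ^ (n-1-k) * G)
        = (Equiv.Perm.sign (sw n k r) : ℤ)
            • rename (sw n k r) (v n k ^ (n-1-k) * (pairP n (k+1) * G)) := by
    intro r hr
    simp only [mem_Icc] at hr
    have hrn : r < n := by omega
    rcases eq_or_lt_of_le hr.1 with rfl | hlt
    · rw [bridge2 n k k hn0, pairDh_base, sw_self, Equiv.Perm.coe_one, rename_id_apply,
        show k - k = 0 from by omega, pow_zero]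
      simp only [Equiv.Perm.sign_one, Units.val_one, one_smul, one_mul]
      rw [rename_id_apply]
      ring
    · rw [bridge2 n k r hn0, sign_sw n k r hkn hrn (by omega)]
      have harr : v n k ^ (n-1-k) * (pairP n (k+1) * G)
          = pairP n (k+1) * (v n k ^ (n-1-k) * G) := by ring
      rw [harr]
      conv_rhs => rw [map_mul, chainD n k r (by omega) hrn]
      have hpow : (-1 : MvPolynomial (Fin n) ℚ)^(r-k)
          = -(-1 : MvPolynomial (Fin n) ℚ)^(r-k-1) := by
        set m := r - k - 1 with hm
        rw [show r - k = m + 1 from by omega, pow_succ]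
        ring
      rw [hpow]
      simp only [Units.val_neg, Units.val_one, neg_smul, one_smul]
      ring
  rw [Finset.sum_congr rfl hper]
  have hinner : v n k ^ (n-1-k) * (pairP n (k+1) * G)
      = ∑ σ ∈ Finset.univ.filter
          (fun σ : Equiv.Perm (Fin n) => ∀ i : Fin n, (i : ℕ) < k + 1 → σ i = i),
          (Equiv.Perm.sign σ : ℤ) • rename σ (MM n k * f) := by
    rw [heq1, Finset.mul_sum]
    refine Finset.sum_congr rfl fun σ hσ => ?_
    simp only [Finset.mem_filter, Finset.mem_univ, true_and] at hσ
    rw [mul_smul_comm]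
    congr 1
    have hσk : σ ⟨k, hkn⟩ = ⟨k, hkn⟩ := hσ ⟨k, hkn⟩ (by simp)
    have hrenv : rename σ (v n k) = v n k := by rw [v, dif_pos hkn, rename_X, hσk]
    conv_rhs => rw [← MM_split n k hkn, mul_assoc, map_mul, map_pow, hrenv]
  rw [Finset.sum_congr rfl (fun r _ => by rw [hinner] :
    ∀ r ∈ Icc k (n-1), (Equiv.Perm.sign (sw n k r) : ℤ)
        • rename (sw n k r) (v n k ^ (n-1-k) * (pairP n (k+1) * G))
      = (Equiv.Perm.sign (sw n k r) : ℤ) • rename (sw n k r)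
          (∑ σ ∈ Finset.univ.filter
            (fun σ : Equiv.Perm (Fin n) => ∀ i : Fin n, (i : ℕ) < k + 1 → σ i = i),
            (Equiv.Perm.sign σ : ℤ) • rename σ (MM n k * f)))]
  have hexp : ∀ r ∈ Icc k (n-1),
      (Equiv.Perm.sign (sw n k r) : ℤ) • rename (sw n k r)
          (∑ σ ∈ Finset.univ.filter
            (fun σ : Equiv.Perm (Fin n) => ∀ i : Fin n, (i : ℕ) < k + 1 → σ i = i),
            (Equiv.Perm.sign σ : ℤ) • rename σ (MM n k * f))
        = ∑ σ ∈ Finset.univ.filter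
            (fun σ : Equiv.Perm (Fin n) => ∀ i : Fin n, (i : ℕ) < k + 1 → σ i = i),
            (Equiv.Perm.sign (sw n k r * σ) : ℤ) • rename ⇑(sw n k r * σ) (MM n k * f) := by
    intro r _
    rw [map_sum, Finset.smul_sum]
    refine Finset.sum_congr rfl fun σ _ => ?_
    rw [map_zsmul, rename_rename, smul_smul, ← Equiv.Perm.coe_mul, Equiv.Perm.sign_mul]
    push_cast
    rfl
  rw [Finset.sum_congr rfl hexp, Finset.sum_sigma']
  refine Finset.sum_nbij' (fun x => sw n k x.1 * x.2)
    (fun τ => ⟨((τ ⟨k, hkn⟩ : Fin n) : ℕ), sw n k ((τ ⟨k, hkn⟩ : Fin n) : ℕ) * τ⟩)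
    ?_ ?_ ?_ ?_ ?_
  · -- forward membership
    intro x hx
    simp only [Finset.mem_sigma, mem_Icc, Finset.mem_filter, Finset.mem_univ, true_and] at hx
    simp only [Finset.mem_filter, Finset.mem_univ, true_and]
    intro i hi
    rw [Equiv.Perm.mul_apply, hx.2 i (by omega),
      sw_fix n k x.1 hkn (by omega) i (by omega) (by omega)]
  · -- backward membership
    intro τ hτ
    simp only [Finset.mem_filter, Finset.mem_univ, true_and] at hτ
    simp only [Finset.mem_sigma, mem_Icc, Finset.mem_filter, Finset.mem_univ, true_and]
    have hrn' : ((τ ⟨k, hkn⟩ : Fin n) : ℕ) < n := (τ ⟨k, hkn⟩).isLt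
    have hge : k ≤ ((τ ⟨k, hkn⟩ : Fin n) : ℕ) := by
      by_contra hcon
      push_neg at hcon
      have h1 : τ ⟨((τ ⟨k, hkn⟩ : Fin n) : ℕ), hrn'⟩ = ⟨((τ ⟨k, hkn⟩ : Fin n) : ℕ), hrn'⟩ :=
        hτ _ hcon
      have h2 : τ ⟨k, hkn⟩ = ⟨((τ ⟨k, hkn⟩ : Fin n) : ℕ), hrn'⟩ := Fin.ext rfl
      have h3 := τ.injective (h2.trans h1.symm)
      rw [Fin.ext_iff] at h3
      omega
    refine ⟨⟨hge, by omega⟩, ?_⟩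
    intro i hi
    rw [Equiv.Perm.mul_apply]
    by_cases hik : (i : ℕ) < k
    · rw [hτ i hik, sw_fix n k _ hkn hrn' i (by omega) (by omega)]
    · have hieq : i = ⟨k, hkn⟩ := Fin.ext (by omega)
      subst hieq
      have h2 : τ ⟨k, hkn⟩ = ⟨((τ ⟨k, hkn⟩ : Fin n) : ℕ), hrn'⟩ := Fin.ext rfl
      rw [h2]
      apply Fin.ext
      rw [sw_apply_coe n k _ hkn hrn']
      simp only [Fin.val_mk]
      split_ifs <;> omega
  · -- left inverse
    intro x hx
    simp only [Finset.mem_sigma, mem_Icc, Finset.mem_filter, Finset.mem_univ, true_and] at hx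
    have hc : (((sw n k x.1 * x.2) ⟨k, hkn⟩ : Fin n) : ℕ) = x.1 := by
      rw [Equiv.Perm.mul_apply, hx.2 ⟨k, hkn⟩ (by omega)]
      rw [sw_apply_coe n k x.1 hkn (by omega)]
      simp
    refine Sigma.ext hc (heq_of_eq ?_)
    show sw n k (((sw n k x.1 * x.2) ⟨k, hkn⟩ : Fin n) : ℕ) * (sw n k x.1 * x.2) = x.2
    rw [hc, ← mul_assoc, sw_mul_self, one_mul]
  · -- right inverse
    intro τ _
    show sw n k ((τ ⟨k, hkn⟩ : Fin n) : ℕ) * (sw n k ((τ ⟨k, hkn⟩ : Fin n) : ℕ) * τ) = τ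
    rw [← mul_assoc, sw_mul_self, one_mul]
  · intro x _
    rfl
end WSR5

end

/-- The recursion `W_k^{(n)} = ξ_{n-1} ⋯ ξ_{k+1} ∘ W_{k+1}^{(n)}` (1-based indices;
in 0-based indexing the isobaric divided difference operators `xi m`, acting on the
variables in positions `m, m+1`, are applied for `m = k, k+1, ..., n-2`, innermost
first). -/
theorem weyl_symmetrizer_recursion (n k : ℕ) (hk : k + 1 ≤ n)
    (Wk Wk1 : MvPolynomial (Fin n) ℚ → MvPolynomial (Fin n) ℚ)
    (hWk : IsWeylSym n k Wk) (hWk1 : IsWeylSym n (k+1) Wk1)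
    (xi : ℕ → MvPolynomial (Fin n) ℚ → MvPolynomial (Fin n) ℚ)
    (hxi : ∀ (a b : Fin n), (b : ℕ) = (a : ℕ) + 1 →
      ∀ g, (X a - X b) * xi (a : ℕ) g = X a * g - X b * rename (Equiv.swap a b) g)
    (f : MvPolynomial (Fin n) ℚ) :
    Wk f = (List.range' k (n - 1 - k)).foldl (fun g m => xi m g) (Wk1 f) := by
  have hn0 : 0 < n := by omega
  have hxi' : ∀ t, t + 1 < n → ∀ g, (WSR.v n t - WSR.v n (t+1)) * xi t g
      = WSR.v n t * g - WSR.v n (t+1) * rename (WSR.sw n t (t+1)) g := by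
    intro t ht g
    have h := hxi ⟨t, by omega⟩ ⟨t+1, ht⟩ rfl g
    rw [WSR.v, WSR.v, dif_pos (show t < n by omega), dif_pos ht, WSR.sw,
      dif_pos (show t < n ∧ t + 1 < n from ⟨by omega, ht⟩)]
    exact h
  have hGsym : ∀ m, k+1 ≤ m → m+2 ≤ n →
      rename (WSR.sw n m (m+1)) (Wk1 f) = Wk1 f := by
    intro m hm1 hm2
    exact WSR5.Gsym_of n (k+1) (Wk1 f) ((WSR5.MM n (k+1)) * f) (hWk1 f) m hm1 hm2
  have hclaim := WSR4.claim_main n k hk (Wk1 f) xi hxi' hGsym (n-1) (by omega) le_rfl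
  have hfs := WSR5.final_sum n k hk (Wk1 f) f (hWk1 f)
  apply mul_left_cancel₀ (WSR5.pairP_ne n k)
  calc WSR3.pairP n k * Wk f
      = ∑ σ ∈ Finset.univ.filter
          (fun σ : Equiv.Perm (Fin n) => ∀ i : Fin n, (i : ℕ) < k → σ i = i),
          (Equiv.Perm.sign σ : ℤ) • rename σ (WSR5.MM n k * f) := hWk f
    _ = ∑ r ∈ Finset.Icc k (n-1), (-1 : MvPolynomial (Fin n) ℚ)^(r-k) * WSR.dh n k r (n-1)
          * rename (WSR.sw n k r) (WSR.v n k ^ (n-1-k) * Wk1 f) := hfs.symm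
    _ = WSR.dd n k (n-1) * ((List.range' k (n - 1 - k)).foldl (fun g m => xi m g) (Wk1 f)) :=
          hclaim.symm
    _ = WSR3.pairP n k * ((List.range' k (n - 1 - k)).foldl (fun g m => xi m g) (Wk1 f)) := by
          rw [WSR3.bridge1 n k hn0]
end
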